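/- Let A ∈ ℝ^{n×N} be a Parseval frame and T ⊆ {1,…,N} with |T| = s < n such that A_T* A_T and A_{T^c} A_{T^c}* are invertible. Suppose the sequence {x^k} follows the NST+HT iteration and that T_k = T for all k ≥ j for some integer j. Then x^k converges as k → ∞ to the vector x^♮ given by x^♮_T = x^j_T + (A_T* A_T)^{-1} A_T* A_{T^c} x^j_{T^c} and x^♮_{T^c} = A_{T^c}* ( I − A_T (A_T* A_T)^{-1} A_T* ) A_{T^c} x^j_{T^c}. -/

import Mathlib

open Matrix Finset Filter Topology

/-- Euclidean norm of a vector. -/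
noncomputable def enorm {k : ℕ} (x : Fin k → ℝ) : ℝ := Real.sqrt (∑ i, x i ^ 2)

/-- `x` has at most `s` nonzero entries. -/
def IsSparse {k : ℕ} (s : ℕ) (x : Fin k → ℝ) : Prop :=
  (Finset.univ.filter fun i => x i ≠ 0).card ≤ s

/-- Spectral norm (ℓ²-operator norm) of a matrix. -/
noncomputable def specNorm {m k : Type*} [Fintype m] [Fintype k] [DecidableEq k]
    (M : Matrix m k ℝ) : ℝ :=
  ‖LinearMap.toContinuousLinearMap (Matrix.toEuclideanLin M)‖

/-- `cols A T` is the submatrix of `A` consisting of the columns indexed by `T`. -/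
def cols {n N : ℕ} (A : Matrix (Fin n) (Fin N) ℝ) (T : Finset (Fin N)) :
    Matrix (Fin n) {i : Fin N // i ∈ T} ℝ := Matrix.of fun r c => A r c.1

/-- `subv x T` is the subvector of `x` consisting of the entries indexed by `T`. -/
def subv {N : ℕ} (x : Fin N → ℝ) (T : Finset (Fin N)) : {i : Fin N // i ∈ T} → ℝ :=
  fun i => x i.1

/-- The feedback term `(A_T* A_T)⁻¹ A_T* A_{Tᶜ} x_{Tᶜ}`. -/
noncomputable def fb {n N : ℕ} (A : Matrix (Fin n) (Fin N) ℝ) (T : Finset (Fin N))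
    (x : Fin N → ℝ) : {i : Fin N // i ∈ T} → ℝ :=
  ((cols A T)ᵀ * cols A T)⁻¹ *ᵥ ((cols A T)ᵀ *ᵥ (cols A Tᶜ *ᵥ subv x Tᶜ))



lemma nst_conj_pow {k : Type*} [Fintype k] [DecidableEq k] (U D : Matrix k k ℝ)
    (h1 : U * star U = 1) (h2 : star U * U = 1) (m : ℕ) :
    (U * D * star U) ^ m = U * D ^ m * star U := by
  induction m with
  | zero => simp [h1]
  | succ m ih =>
    rw [pow_succ, ih, pow_succ]
    simp only [mul_assoc]
    rw [← mul_assoc (star U) U, h2, one_mul]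

lemma nst_pow_tendsto_zero {k : Type*} [Fintype k] [DecidableEq k] (M : Matrix k k ℝ)
    (hherm : M.IsHermitian) (hdet : IsUnit M.det)
    (hpsd : ∀ v : k → ℝ, 0 ≤ v ⬝ᵥ (M *ᵥ v))
    (hle : ∀ v : k → ℝ, v ⬝ᵥ (M *ᵥ v) ≤ v ⬝ᵥ v) :
    Tendsto (fun m => ((1 : Matrix k k ℝ) - M) ^ m) atTop (𝓝 0) := by
  set μ := hherm.eigenvalues with hμ
  set U := (hherm.eigenvectorUnitary : Matrix k k ℝ) with hUdef
  have h1 : U * star U = 1 := (Matrix.mem_unitaryGroup_iff).mp hherm.eigenvectorUnitary.2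
  have h2 : star U * U = 1 := (Matrix.mem_unitaryGroup_iff').mp hherm.eigenvectorUnitary.2
  have hvv : ∀ i, (⇑(hherm.eigenvectorBasis i)) ⬝ᵥ (⇑(hherm.eigenvectorBasis i)) = 1 := by
    intro i
    have hn := hherm.eigenvectorBasis.orthonormal.1 i
    have : (⇑(hherm.eigenvectorBasis i)) ⬝ᵥ (⇑(hherm.eigenvectorBasis i))
        = @inner ℝ _ _ (hherm.eigenvectorBasis i) (hherm.eigenvectorBasis i) := by
      rw [PiLp.inner_apply]; simp [dotProduct, PiLp.inner_apply, RCLike.inner_apply, mul_comm, sq]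
    rw [this, real_inner_self_eq_norm_sq, hn]; norm_num
  have heig : ∀ i, μ i = (⇑(hherm.eigenvectorBasis i)) ⬝ᵥ (M *ᵥ ⇑(hherm.eigenvectorBasis i)) := by
    intro i
    have := hherm.eigenvalues_eq i
    simpa using this
  have hpos : ∀ i, 0 < μ i := by
    intro i
    have h0 : (0:ℝ) ≤ μ i := by rw [heig i]; exact hpsd _
    rcases lt_or_eq_of_le h0 with h | h
    · exact h
    · exfalso
      have hdetprod := hherm.det_eq_prod_eigenvalues
      rw [Finset.prod_eq_zero (Finset.mem_univ i) (by exact h.symm)] at hdetprod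
      simp only [hdetprod] at hdet
      exact not_isUnit_zero hdet
  have hle1 : ∀ i, μ i ≤ 1 := by
    intro i
    rw [heig i]; exact (hle _).trans_eq (hvv i)
  have habs : ∀ i, |1 - μ i| < 1 := by
    intro i
    rw [abs_lt]
    constructor
    · linarith [hle1 i]
    · linarith [hpos i]
  have hspec : M = U * diagonal μ * star U := by
    have := hherm.spectral_theorem
    simpa using this
  have hsub : (1 : Matrix k k ℝ) - M = U * (diagonal fun i => 1 - μ i) * star U := by
    have hd : (diagonal fun i => 1 - μ i) = 1 - diagonal μ := by
      rw [← Matrix.diagonal_one, Matrix.diagonal_sub]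
    rw [hd, Matrix.mul_sub, Matrix.sub_mul, mul_one, h1, ← hspec]
  have hpow : ∀ m, ((1 : Matrix k k ℝ) - M) ^ m
      = U * ((diagonal fun i => 1 - μ i) ^ m) * star U := by
    intro m; rw [hsub, nst_conj_pow _ _ h1 h2]
  have hDtend : Tendsto (fun m => ((diagonal fun i => 1 - μ i) : Matrix k k ℝ) ^ m) atTop (𝓝 0) := by
    simp only [Matrix.diagonal_pow]
    apply tendsto_pi_nhds.mpr; intro a
    rw [tendsto_pi_nhds]; intro b
    simp only [Matrix.diagonal_apply, Pi.pow_apply, Matrix.zero_apply]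
    by_cases hab : a = b
    · subst hab
      simp only [if_pos rfl]
      exact tendsto_pow_atTop_nhds_zero_of_abs_lt_one (habs a)
    · simp [hab]
  have hcont : Continuous (fun W : Matrix k k ℝ => U * W * star U) :=
    (continuous_const.matrix_mul continuous_id).matrix_mul continuous_const
  have hfin := (hcont.tendsto 0).comp hDtend
  have h0 : U * (0 : Matrix k k ℝ) * star U = 0 := by simp
  rw [Function.comp_def] at hfin
  rw [h0] at hfin
  exact hfin.congr fun m => (hpow m).symm


lemma nst_dot_transpose {a b : Type*} [Fintype a] [Fintype b] (Q : Matrix a b ℝ)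
    (v : b → ℝ) (w : a → ℝ) : v ⬝ᵥ (Qᵀ *ᵥ w) = (Q *ᵥ v) ⬝ᵥ w := by
  simp only [dotProduct, Matrix.mulVec, Matrix.transpose_apply, Finset.mul_sum,
    Finset.sum_mul]
  rw [Finset.sum_comm]
  apply Finset.sum_congr rfl; intros
  apply Finset.sum_congr rfl; intros
  ring

lemma nst_quad_le {N' : Type*} [Fintype N'] [DecidableEq N'] (P0 : Matrix N' N' ℝ)
    (hsym : P0ᵀ = P0) (hidem : P0 * P0 = P0) (w : N' → ℝ) :
    w ⬝ᵥ (P0 *ᵥ w) ≤ w ⬝ᵥ w := by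
  have hQsym : (1 - P0)ᵀ = 1 - P0 := by
    rw [Matrix.transpose_sub, Matrix.transpose_one, hsym]
  have hQidem : (1 - P0) * (1 - P0) = 1 - P0 := by
    simp only [Matrix.mul_sub, Matrix.sub_mul, Matrix.mul_one, Matrix.one_mul, hidem]
    abel
  have key : w ⬝ᵥ w - w ⬝ᵥ (P0 *ᵥ w) = ((1 - P0) *ᵥ w) ⬝ᵥ ((1 - P0) *ᵥ w) := by
    have h1 : ((1 - P0) *ᵥ w) ⬝ᵥ ((1 - P0) *ᵥ w)
        = w ⬝ᵥ ((1 - P0)ᵀ *ᵥ ((1 - P0) *ᵥ w)) := (nst_dot_transpose (1 - P0) w _).symm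
    rw [h1, hQsym, Matrix.mulVec_mulVec, hQidem, Matrix.sub_mulVec, Matrix.one_mulVec,
      dotProduct_sub]
  have hnn : 0 ≤ ((1 - P0) *ᵥ w) ⬝ᵥ ((1 - P0) *ᵥ w) :=
    Finset.sum_nonneg fun i _ => mul_self_nonneg _
  linarith [key, hnn]

lemma nst_key2 {a b : Type*} [Fintype a] [Fintype b] [DecidableEq a] [DecidableEq b]
    (B : Matrix a b ℝ) (m : ℕ) :
    Bᵀ * (1 - B * Bᵀ) ^ m = (1 - Bᵀ * B) ^ m * Bᵀ := by
  have hswap : Bᵀ * (1 - B * Bᵀ) = (1 - Bᵀ * B) * Bᵀ := by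
    simp only [Matrix.mul_sub, Matrix.sub_mul, Matrix.mul_one, Matrix.one_mul, Matrix.mul_assoc]
  induction m with
  | zero => simp
  | succ m ih =>
    rw [pow_succ, ← Matrix.mul_assoc, ih, Matrix.mul_assoc, hswap, ← Matrix.mul_assoc,
      ← pow_succ]

lemma nst_key {a b : Type*} [Fintype a] [Fintype b] [DecidableEq a] [DecidableEq b]
    (B : Matrix a b ℝ) (h : IsUnit (Bᵀ * B)) (m : ℕ) :
    (1 - B * Bᵀ) ^ m
      = (1 - B * (Bᵀ * B)⁻¹ * Bᵀ) + B * ((1 - Bᵀ * B) ^ m) * (Bᵀ * B)⁻¹ * Bᵀ := by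
  have hdet : IsUnit (Bᵀ * B).det := (Matrix.isUnit_iff_isUnit_det _).mp h
  have hX1 : (Bᵀ * B)⁻¹ * (Bᵀ * B) = 1 := Matrix.nonsing_inv_mul _ hdet
  have hX2 : (Bᵀ * B) * (Bᵀ * B)⁻¹ = 1 := Matrix.mul_nonsing_inv _ hdet
  have e1 : (Bᵀ * B)⁻¹ * (Bᵀ * (B * Bᵀ)) = Bᵀ := by
    rw [← Matrix.mul_assoc Bᵀ B Bᵀ, ← Matrix.mul_assoc, hX1, Matrix.one_mul]
  have e2 : (Bᵀ * B) * ((Bᵀ * B)⁻¹ * Bᵀ) = Bᵀ := by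
    rw [← Matrix.mul_assoc, hX2, Matrix.one_mul]
  have e2' : Bᵀ * (B * ((Bᵀ * B)⁻¹ * Bᵀ)) = Bᵀ := by
    rw [← Matrix.mul_assoc, e2]
  induction m with
  | zero =>
    simp only [pow_zero, Matrix.mul_one, Matrix.one_mul]
    rw [sub_add_cancel]
  | succ m ih =>
    rw [pow_succ, ih, pow_succ]
    simp only [Matrix.mul_sub, Matrix.sub_mul, Matrix.add_mul, Matrix.mul_add,
      Matrix.mul_one, Matrix.one_mul, Matrix.mul_assoc, e1, e2, e2']
    abel


/-- convergence of NST+HT when the support stabilizes. -/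
theorem stmt_1 {n N s : ℕ} (hnN : n < N) (A : Matrix (Fin n) (Fin N) ℝ)
    (hParseval : A * Aᵀ = 1)
    (T : Finset (Fin N)) (hTcard : T.card = s) (hsn : s < n)
    (hgram : IsUnit ((cols A T)ᵀ * cols A T))
    (hcompl : IsUnit (cols A Tᶜ * (cols A Tᶜ)ᵀ))
    (x u : ℕ → Fin N → ℝ) (Tk : ℕ → Finset (Fin N))
    (hTkcard : ∀ k, (Tk k).card = s)
    (hTkmax : ∀ k, ∀ i ∈ Tk k, ∀ j ∉ Tk k, |x k j| ≤ |x k i|)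
    (hu1 : ∀ k, ∀ i ∈ Tk k, u k i = x k i)
    (hu2 : ∀ k, ∀ i ∉ Tk k, u k i = 0)
    (hx : ∀ k, x (k+1) = x k + (1 - Aᵀ * (A * Aᵀ)⁻¹ * A) *ᵥ (u k - x k))
    (j : ℕ) (hT : ∀ k, j ≤ k → Tk k = T) :
    Filter.Tendsto x Filter.atTop (nhds (fun i =>
      if hi : i ∈ T then
        x j i + ((((cols A T)ᵀ * cols A T)⁻¹ * (cols A T)ᵀ) *ᵥ
          (cols A Tᶜ *ᵥ subv (x j) Tᶜ)) ⟨i, hi⟩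
      else
        ((cols A Tᶜ)ᵀ *ᵥ (((1 : Matrix (Fin n) (Fin n) ℝ) -
            cols A T * ((cols A T)ᵀ * cols A T)⁻¹ * (cols A T)ᵀ) *ᵥ
          (cols A Tᶜ *ᵥ subv (x j) Tᶜ))) ⟨i, Finset.mem_compl.mpr hi⟩)) := by
  classical
  set AT := cols A T with hATdef
  set C := cols A Tᶜ with hCdef
  set y := C *ᵥ subv (x j) Tᶜ with hydef
  have hdet : IsUnit ((ATᵀ * AT).det) := (Matrix.isUnit_iff_isUnit_det _).mp hgram
  have hX1 : (ATᵀ * AT)⁻¹ * (ATᵀ * AT) = 1 := Matrix.nonsing_inv_mul _ hdet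
  have hX2 : (ATᵀ * AT) * (ATᵀ * AT)⁻¹ = 1 := Matrix.mul_nonsing_inv _ hdet
  -- sum splitting
  have hsum : ∀ f : Fin N → ℝ,
      (∑ c : {i : Fin N // i ∈ T}, f c.1) + (∑ c : {i : Fin N // i ∈ Tᶜ}, f c.1)
        = ∑ c, f c := by
    intro f
    rw [Finset.sum_coe_sort T f, Finset.sum_coe_sort Tᶜ f]
    exact Finset.sum_add_sum_compl T f
  -- splitting of A *ᵥ w
  have hAsplit : ∀ w : Fin N → ℝ, A *ᵥ w = AT *ᵥ subv w T + C *ᵥ subv w Tᶜ := by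
    intro w; funext r
    have he : (A *ᵥ w) r = ∑ c, A r c * w c := rfl
    rw [he, ← hsum fun c => A r c * w c]
    simp [Matrix.mulVec, dotProduct, hATdef, hCdef, cols, subv]
  -- transpose components
  have hATT : ∀ (w : Fin n → ℝ) (i : Fin N) (hi : i ∈ T),
      (Aᵀ *ᵥ w) i = (ATᵀ *ᵥ w) ⟨i, hi⟩ := by
    intro w i hi
    simp [Matrix.mulVec, dotProduct, hATdef, cols, mul_comm]
  have hCTT : ∀ (w : Fin n → ℝ) (i : Fin N) (hi : i ∈ Tᶜ),
      (Aᵀ *ᵥ w) i = (Cᵀ *ᵥ w) ⟨i, hi⟩ := by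
    intro w i hi
    simp [Matrix.mulVec, dotProduct, hCdef, cols, mul_comm]
  -- Parseval split
  have hsplit : AT * ATᵀ + C * Cᵀ = (1 : Matrix (Fin n) (Fin n) ℝ) := by
    apply Matrix.ext; intro r r'
    have h := congrFun (congrFun hParseval r) r'
    simp only [Matrix.mul_apply, Matrix.transpose_apply] at h
    rw [← hsum fun c => A r c * A r' c] at h
    simpa [Matrix.add_apply, Matrix.mul_apply, Matrix.transpose_apply, hATdef, hCdef,
      cols, subv] using h
  have hCC : C * Cᵀ = 1 - AT * ATᵀ := eq_sub_of_add_eq' hsplit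
  clear_value AT C
  have hP0 : Aᵀ * (A * Aᵀ)⁻¹ * A = Aᵀ * A := by rw [hParseval, inv_one, Matrix.mul_one]
  -- the step recurrences
  have hvspec : ∀ k, j ≤ k → (u k - x k) = fun c => if c ∈ T then 0 else - x k c := by
    intro k hk; funext c
    by_cases hc : c ∈ T
    · simp [hu1 k c (by rw [hT k hk]; exact hc), hc]
    · simp [hu2 k c (by rw [hT k hk]; exact hc), hc]
  have hAv : ∀ k, j ≤ k → A *ᵥ (u k - x k) = -(C *ᵥ subv (x k) Tᶜ) := by
    intro k hk
    rw [hAsplit]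
    have h1 : subv (u k - x k) T = 0 := by
      funext c; rw [subv, hvspec k hk]; simp [c.2]
    have h2 : subv (u k - x k) Tᶜ = -(subv (x k) Tᶜ) := by
      funext c; rw [Pi.neg_apply, subv, subv, hvspec k hk]
      simp [Finset.mem_compl.mp c.2]
    rw [h1, h2, Matrix.mulVec_zero, Matrix.mulVec_neg, zero_add]
  have hstepT : ∀ k, j ≤ k → ∀ (i : Fin N) (hi : i ∈ T),
      x (k+1) i = x k i + (ATᵀ *ᵥ (C *ᵥ subv (x k) Tᶜ)) ⟨i, hi⟩ := by
    intro k hk i hi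
    have h := congrFun (hx k) i
    rw [hP0] at h
    rw [h, Pi.add_apply, Matrix.sub_mulVec, Matrix.one_mulVec, Pi.sub_apply,
      ← Matrix.mulVec_mulVec, hAv k hk, Matrix.mulVec_neg, Pi.neg_apply,
      hATT _ i hi]
    have hv0 : (u k - x k) i = 0 := by rw [hvspec k hk]; simp [hi]
    rw [hv0]; ring
  have hstepC : ∀ k, j ≤ k → ∀ (i : Fin N) (hi : i ∉ T),
      x (k+1) i = (Cᵀ *ᵥ (C *ᵥ subv (x k) Tᶜ)) ⟨i, Finset.mem_compl.mpr hi⟩ := by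
    intro k hk i hi
    have h := congrFun (hx k) i
    rw [hP0] at h
    rw [h, Pi.add_apply, Matrix.sub_mulVec, Matrix.one_mulVec, Pi.sub_apply,
      ← Matrix.mulVec_mulVec, hAv k hk, Matrix.mulVec_neg, Pi.neg_apply,
      hCTT _ i (Finset.mem_compl.mpr hi)]
    have hv0 : (u k - x k) i = - x k i := by rw [hvspec k hk]; simp [hi]
    rw [hv0]; ring
  -- closed forms
  have HB : ∀ m, C *ᵥ subv (x (j+m)) Tᶜ = ((1 - AT * ATᵀ) ^ m) *ᵥ y := by
    intro m
    induction m with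
    | zero => simp [hydef]
    | succ m ih =>
      have hvec : subv (x (j+(m+1))) Tᶜ = Cᵀ *ᵥ (C *ᵥ subv (x (j+m)) Tᶜ) := by
        funext c
        have h := hstepC (j+m) (Nat.le_add_right j m) c.1 (Finset.mem_compl.mp c.2)
        rw [show j + (m+1) = (j+m)+1 by omega]
        rw [subv, h]
      rw [hvec, ih, Matrix.mulVec_mulVec, Matrix.mulVec_mulVec, hCC, ← pow_succ']
  have hcomm : ∀ m : ℕ, (ATᵀ * AT) * (1 - ATᵀ * AT) ^ m = (1 - ATᵀ * AT) ^ m * (ATᵀ * AT) :=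
    fun m => (((Commute.one_right (ATᵀ * AT)).sub_right (Commute.refl _)).pow_right m).eq
  have HA : ∀ m, subv (x (j+m)) T
      = subv (x j) T + ((ATᵀ * AT)⁻¹ * (1 - (1 - ATᵀ * AT) ^ m) * ATᵀ) *ᵥ y := by
    intro m
    induction m with
    | zero => simp
    | succ m ih =>
      have hvec : subv (x (j+(m+1))) T
          = subv (x (j+m)) T + ATᵀ *ᵥ (C *ᵥ subv (x (j+m)) Tᶜ) := by
        funext c
        have h := hstepT (j+m) (Nat.le_add_right j m) c.1 c.2
        rw [show j + (m+1) = (j+m)+1 by omega]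
        rw [Pi.add_apply, subv, h, subv]
      have hid : (ATᵀ * AT)⁻¹ * (1 - (1 - ATᵀ * AT) ^ m) * ATᵀ + (1 - ATᵀ * AT) ^ m * ATᵀ
          = (ATᵀ * AT)⁻¹ * (1 - (1 - ATᵀ * AT) ^ (m+1)) * ATᵀ := by
        have h1 : (1 - ATᵀ * AT) ^ m = (ATᵀ * AT)⁻¹ * ((ATᵀ * AT) * (1 - ATᵀ * AT) ^ m) := by
          rw [← Matrix.mul_assoc, hX1, Matrix.one_mul]
        have h2 : (1 - (1 - ATᵀ * AT) ^ m) + (ATᵀ * AT) * (1 - ATᵀ * AT) ^ m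
            = 1 - (1 - ATᵀ * AT) ^ (m+1) := by
          rw [hcomm m, pow_succ]
          noncomm_ring
        calc (ATᵀ * AT)⁻¹ * (1 - (1 - ATᵀ * AT) ^ m) * ATᵀ + (1 - ATᵀ * AT) ^ m * ATᵀ
            = ((ATᵀ * AT)⁻¹ * (1 - (1 - ATᵀ * AT) ^ m)
                + (ATᵀ * AT)⁻¹ * ((ATᵀ * AT) * (1 - ATᵀ * AT) ^ m)) * ATᵀ := by
              rw [← h1, Matrix.add_mul]
          _ = ((ATᵀ * AT)⁻¹ * ((1 - (1 - ATᵀ * AT) ^ m) + (ATᵀ * AT) * (1 - ATᵀ * AT) ^ m)) * ATᵀ := by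
              rw [Matrix.mul_add]
          _ = (ATᵀ * AT)⁻¹ * (1 - (1 - ATᵀ * AT) ^ (m+1)) * ATᵀ := by rw [h2]
      rw [hvec, ih, HB m, Matrix.mulVec_mulVec y ATᵀ ((1 - AT * ATᵀ) ^ m),
        nst_key2 AT m, add_assoc, ← Matrix.add_mulVec, hid]
  -- spectral hypotheses for M = ATᵀ * AT
  have hherm : (ATᵀ * AT).IsHermitian := by
    have := Matrix.isHermitian_conjTranspose_mul_self AT
    simpa [Matrix.conjTranspose_eq_transpose_of_trivial] using this
  have hpsd : ∀ v : {i : Fin N // i ∈ T} → ℝ, 0 ≤ v ⬝ᵥ ((ATᵀ * AT) *ᵥ v) := by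
    intro v
    rw [← Matrix.mulVec_mulVec, nst_dot_transpose]
    exact Finset.sum_nonneg fun i _ => mul_self_nonneg _
  have hle : ∀ v : {i : Fin N // i ∈ T} → ℝ, v ⬝ᵥ ((ATᵀ * AT) *ᵥ v) ≤ v ⬝ᵥ v := by
    intro v
    set w : Fin N → ℝ := fun c => if h : c ∈ T then v ⟨c, h⟩ else 0 with hwdef
    have hATv : AT *ᵥ v = A *ᵥ w := by
      funext r
      rw [show (A *ᵥ w) r = ∑ c, A r c * w c from rfl, ← hsum fun c => A r c * w c]
      have hz : (∑ c : {i : Fin N // i ∈ Tᶜ}, A r c.1 * w c.1) = 0 := by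
        apply Finset.sum_eq_zero; intro c _
        have : w c.1 = 0 := by rw [hwdef]; simp [Finset.mem_compl.mp c.2]
        rw [this, mul_zero]
      simp only [hz, add_zero]
      simp [Matrix.mulVec, dotProduct, hATdef, cols, hwdef, subv]
    have hvw : v ⬝ᵥ v = w ⬝ᵥ w := by
      rw [show w ⬝ᵥ w = ∑ c, w c * w c from rfl, ← hsum fun c => w c * w c]
      have hz : (∑ c : {i : Fin N // i ∈ Tᶜ}, w c.1 * w c.1) = 0 := by
        apply Finset.sum_eq_zero; intro c _
        have : w c.1 = 0 := by rw [hwdef]; simp [Finset.mem_compl.mp c.2]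
        rw [this, mul_zero]
      simp only [hz, add_zero]
      simp [dotProduct, hwdef]
    have hsym : (Aᵀ * A)ᵀ = Aᵀ * A := by
      rw [Matrix.transpose_mul, Matrix.transpose_transpose]
    have hidem : (Aᵀ * A) * (Aᵀ * A) = Aᵀ * A := by
      rw [Matrix.mul_assoc, ← Matrix.mul_assoc A Aᵀ A, hParseval, Matrix.one_mul]
    calc v ⬝ᵥ ((ATᵀ * AT) *ᵥ v) = (AT *ᵥ v) ⬝ᵥ (AT *ᵥ v) := by
          rw [← Matrix.mulVec_mulVec, nst_dot_transpose]
      _ = (A *ᵥ w) ⬝ᵥ (A *ᵥ w) := by rw [hATv]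
      _ = w ⬝ᵥ ((Aᵀ * A) *ᵥ w) := by rw [← Matrix.mulVec_mulVec, nst_dot_transpose]
      _ ≤ w ⬝ᵥ w := nst_quad_le (Aᵀ * A) hsym hidem w
      _ = v ⬝ᵥ v := hvw.symm
  have hpow := nst_pow_tendsto_zero (ATᵀ * AT) hherm hdet hpsd hle
  -- finish
  rw [tendsto_pi_nhds]
  intro i
  by_cases hi : i ∈ T
  · simp only [dif_pos hi]
    rw [← tendsto_add_atTop_iff_nat j]
    have hform : ∀ m : ℕ, x (m + j) i
        = x j i + (((ATᵀ * AT)⁻¹ * (1 - (1 - ATᵀ * AT) ^ m) * ATᵀ) *ᵥ y) ⟨i, hi⟩ := by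
      intro m
      have h := congrFun (HA m) ⟨i, hi⟩
      rw [show m + j = j + m by omega]
      simpa [subv] using h
    have hcont : Continuous (fun W : Matrix {i : Fin N // i ∈ T} {i : Fin N // i ∈ T} ℝ =>
        x j i + ((((ATᵀ * AT)⁻¹ * (1 - W) * ATᵀ) *ᵥ y) ⟨i, hi⟩)) := by
      apply continuous_const.add
      change Continuous ((fun p : {i : Fin N // i ∈ T} → ℝ => p ⟨i, hi⟩) ∘
        (fun W : Matrix {i : Fin N // i ∈ T} {i : Fin N // i ∈ T} ℝ =>
          ((ATᵀ * AT)⁻¹ * (1 - W) * ATᵀ) *ᵥ y))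
      exact (continuous_apply _).comp (((continuous_const.matrix_mul
        (continuous_const.sub continuous_id)).matrix_mul continuous_const).matrix_mulVec
        continuous_const)
    have hlim := (hcont.tendsto 0).comp hpow
    rw [Function.comp_def] at hlim
    have h0 : x j i + ((((ATᵀ * AT)⁻¹ * (1 - (0 : Matrix _ _ ℝ)) * ATᵀ) *ᵥ y) ⟨i, hi⟩)
        = x j i + ((((ATᵀ * AT)⁻¹ * ATᵀ) *ᵥ y) ⟨i, hi⟩) := by
      rw [sub_zero, Matrix.mul_one]
    rw [h0] at hlim
    exact hlim.congr fun m => (hform m).symm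
  · simp only [dif_neg hi]
    rw [← tendsto_add_atTop_iff_nat (j+1)]
    have hform : ∀ m : ℕ, x (m + (j+1)) i
        = (Cᵀ *ᵥ (((1 - AT * (ATᵀ * AT)⁻¹ * ATᵀ)
            + AT * ((1 - ATᵀ * AT) ^ m) * (ATᵀ * AT)⁻¹ * ATᵀ) *ᵥ y)) ⟨i, Finset.mem_compl.mpr hi⟩ := by
      intro m
      have h := hstepC (j+m) (Nat.le_add_right j m) i hi
      rw [show m + (j+1) = (j+m)+1 by omega, h, HB m, nst_key AT hgram m]
    have hcont : Continuous (fun W : Matrix {i : Fin N // i ∈ T} {i : Fin N // i ∈ T} ℝ =>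
        (Cᵀ *ᵥ (((1 - AT * (ATᵀ * AT)⁻¹ * ATᵀ)
            + AT * W * (ATᵀ * AT)⁻¹ * ATᵀ) *ᵥ y)) ⟨i, Finset.mem_compl.mpr hi⟩) := by
      change Continuous ((fun p : {i : Fin N // i ∈ Tᶜ} → ℝ => p ⟨i, Finset.mem_compl.mpr hi⟩) ∘
        (fun W : Matrix {i : Fin N // i ∈ T} {i : Fin N // i ∈ T} ℝ =>
          Cᵀ *ᵥ (((1 - AT * (ATᵀ * AT)⁻¹ * ATᵀ)
            + AT * W * (ATᵀ * AT)⁻¹ * ATᵀ) *ᵥ y)))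
      apply (continuous_apply _).comp
      apply Continuous.matrix_mulVec continuous_const
      apply Continuous.matrix_mulVec _ continuous_const
      apply continuous_const.add
      exact ((continuous_const.matrix_mul continuous_id).matrix_mul
        continuous_const).matrix_mul continuous_const
    have hlim := (hcont.tendsto 0).comp hpow
    rw [Function.comp_def] at hlim
    have h0 : (Cᵀ *ᵥ (((1 - AT * (ATᵀ * AT)⁻¹ * ATᵀ)
            + AT * (0 : Matrix {i : Fin N // i ∈ T} {i : Fin N // i ∈ T} ℝ) * (ATᵀ * AT)⁻¹ * ATᵀ) *ᵥ y)) ⟨i, Finset.mem_compl.mpr hi⟩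
        = (Cᵀ *ᵥ ((1 - AT * (ATᵀ * AT)⁻¹ * ATᵀ) *ᵥ y)) ⟨i, Finset.mem_compl.mpr hi⟩ := by
      rw [Matrix.mul_zero, Matrix.zero_mul, Matrix.zero_mul, add_zero]
    rw [h0] at hlim
    exact hlim.congr fun m => (hform m).symm
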